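/- Let γ : [0,1] → M be a left-continuous causal curve in a forward metric spacetime (M, ℓ) with ℓ upper semicontinuous and max{ℓ,0} continuous and real-valued. Suppose γ satisfies 0 < (t−s)·ℓ(γ₀,γ₁) ≤ ℓ(γₛ,γₜ) < ∞ for all 0 ≤ s < t ≤ 1. Then equality holds: ℓ(γₛ,γₜ) = (t−s)·ℓ(γ₀,γ₁) for all s < t. -/
import Mathlib


open Filter Topology Set

/-- If a left-continuous causal curve `γ` in a forward metric spacetime (with `ℓ` upper
semicontinuous and `max ℓ 0` continuous and real-valued) satisfies
`0 < (t-s)·ℓ(γ₀,γ₁) ≤ ℓ(γₛ,γₜ) < ∞` for all `0 ≤ s < t ≤ 1`, then equality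
`ℓ(γₛ,γₜ) = (t-s)·ℓ(γ₀,γ₁)` holds for all such `s < t`. -/
theorem geodesic_equality
    {M : Type*} [inst : TopologicalSpace M] [PolishSpace M]
    (ℓ : M → M → EReal)
    (htop : inst = TopologicalSpace.generateFrom
      {s : Set M | ∃ x : M, s = {y | 0 < ℓ x y} ∨ s = {y | 0 < ℓ y x}})
    (hrange : ∀ x y : M, ℓ x y ≠ ⊥ → 0 ≤ ℓ x y)
    (hrefl : ∀ x : M, 0 ≤ ℓ x x)
    (hrt : ∀ x y z : M, 0 ≤ ℓ x y → 0 ≤ ℓ y z → ℓ x y + ℓ y z ≤ ℓ x z)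
    (hclosed : IsClosed {p : M × M | 0 ≤ ℓ p.1 p.2})
    (hforward : ∀ (y : ℕ → M) (a b : M), (∀ i, 0 ≤ ℓ a (y i)) →
      (∀ i, 0 ≤ ℓ (y i) (y (i+1))) → (∀ i, 0 ≤ ℓ (y i) b) →
      ∃ p : M, Filter.Tendsto y Filter.atTop (nhds p))
    (husc : UpperSemicontinuous fun p : M × M => ℓ p.1 p.2)
    (hcont : Continuous fun p : M × M => max (ℓ p.1 p.2) 0)
    (hreal : ∀ p : M × M, max (ℓ p.1 p.2) 0 ≠ ⊤)
    (γ : ℝ → M)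
    (hcausal : ∀ s t : ℝ, 0 ≤ s → s ≤ t → t ≤ 1 → 0 ≤ ℓ (γ s) (γ t))
    (hleft : ∀ t ∈ Set.Ioc (0:ℝ) 1,
      Filter.Tendsto γ (nhdsWithin t (Set.Iio t)) (nhds (γ t)))
    (hgeo : ∀ s t : ℝ, 0 ≤ s → s < t → t ≤ 1 →
      0 < ((t - s : ℝ) : EReal) * ℓ (γ 0) (γ 1) ∧
      ((t - s : ℝ) : EReal) * ℓ (γ 0) (γ 1) ≤ ℓ (γ s) (γ t) ∧
      ℓ (γ s) (γ t) < ⊤) :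
    ∀ s t : ℝ, 0 ≤ s → s < t → t ≤ 1 →
      ℓ (γ s) (γ t) = ((t - s : ℝ) : EReal) * ℓ (γ 0) (γ 1) := by

  intro s t hs hst ht
  obtain ⟨hL0, -, hLtop⟩ := hgeo 0 1 le_rfl one_pos le_rfl
  have hL0' : (0:EReal) < ℓ (γ 0) (γ 1) := by
    have : ((1 - 0 : ℝ) : EReal) = 1 := by norm_num
    rw [this, one_mul] at hL0; exact hL0
  set a : ℝ := (ℓ (γ 0) (γ 1)).toReal with ha
  have hLa : ℓ (γ 0) (γ 1) = (a : EReal) :=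
    (EReal.coe_toReal hLtop.ne (ne_bot_of_gt hL0')).symm
  have ha0 : 0 < a := by
    have := hL0'; rw [hLa] at this; exact_mod_cast this
  obtain ⟨hXpos, hX1, hXtop⟩ := hgeo s t hs hst ht
  have hX0 : (0:EReal) < ℓ (γ s) (γ t) := lt_of_lt_of_le hXpos hX1
  set x : ℝ := (ℓ (γ s) (γ t)).toReal with hx
  have hXx : ℓ (γ s) (γ t) = (x : EReal) :=
    (EReal.coe_toReal hXtop.ne (ne_bot_of_gt hX0)).symm
  -- lower bound on the initial piece
  have hpiece1 : ((s : ℝ) : EReal) * ℓ (γ 0) (γ 1) ≤ ℓ (γ 0) (γ s) := by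
    rcases eq_or_lt_of_le hs with h | h
    · rw [← h]; simpa using hrefl (γ 0)
    · have := (hgeo 0 s le_rfl h (by linarith)).2.1
      simpa using this
  have hpiece2 : ((1 - t : ℝ) : EReal) * ℓ (γ 0) (γ 1) ≤ ℓ (γ t) (γ 1) := by
    rcases eq_or_lt_of_le ht with h | h
    · rw [h]; simpa using hrefl (γ 1)
    · exact (hgeo t 1 (by linarith) h le_rfl).2.1
  have hc0s : 0 ≤ ℓ (γ 0) (γ s) := hcausal 0 s le_rfl hs (by linarith)
  have hcst : 0 ≤ ℓ (γ s) (γ t) := le_of_lt hX0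
  have hct1 : 0 ≤ ℓ (γ t) (γ 1) := hcausal t 1 (by linarith) ht le_rfl
  have hc0t : 0 ≤ ℓ (γ 0) (γ t) := hcausal 0 t (by linarith) (by linarith) ht
  have h1 : ℓ (γ 0) (γ s) + ℓ (γ s) (γ t) ≤ ℓ (γ 0) (γ t) := hrt _ _ _ hc0s hcst
  have h2 : ℓ (γ 0) (γ t) + ℓ (γ t) (γ 1) ≤ ℓ (γ 0) (γ 1) := hrt _ _ _ hc0t hct1
  have hchain : ((s : ℝ) : EReal) * ℓ (γ 0) (γ 1) + ℓ (γ s) (γ t)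
      + ((1 - t : ℝ) : EReal) * ℓ (γ 0) (γ 1) ≤ ℓ (γ 0) (γ 1) := by
    calc ((s : ℝ) : EReal) * ℓ (γ 0) (γ 1) + ℓ (γ s) (γ t)
        + ((1 - t : ℝ) : EReal) * ℓ (γ 0) (γ 1)
        ≤ (ℓ (γ 0) (γ s) + ℓ (γ s) (γ t)) + ℓ (γ t) (γ 1) :=
          add_le_add (add_le_add hpiece1 le_rfl) hpiece2
      _ ≤ ℓ (γ 0) (γ t) + ℓ (γ t) (γ 1) := add_le_add h1 le_rfl
      _ ≤ ℓ (γ 0) (γ 1) := h2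
  rw [hLa, hXx] at hchain hX1
  have hchain' : s * a + x + (1 - t) * a ≤ a := by
    rw [← EReal.coe_mul, ← EReal.coe_mul, ← EReal.coe_add, ← EReal.coe_add] at hchain
    exact_mod_cast hchain
  have hX1' : (t - s) * a ≤ x := by
    rw [← EReal.coe_mul] at hX1
    exact_mod_cast hX1
  have hxeq : x = (t - s) * a := by linarith
  rw [hXx, hLa, hxeq, ← EReal.coe_mul]
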